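/- Let x, p ∈ ℝ^n with ‖x‖ = 1 and x^T p = 0, let α ∈ ℝ, and set W = −α x p^T + α p x^T (the skew-symmetric matrix a b^T − b a^T with a = x, b = −α p). Then I + W is invertible and the Cayley-transform update satisfies (I + W)^{−1}(I − W) x = [ (1 − α²‖p‖²) x − 2α p ] / (1 + α²‖p‖²). -/

import Mathlib

open Matrix

lemma aux_vecMulVec_mulVec {n : ℕ} (a b v : Fin n → ℝ) :
    Matrix.mulVec (Matrix.vecMulVec a b) v = (b ⬝ᵥ v) • a := by
  funext i
  simp only [Matrix.mulVec, Matrix.vecMulVec_apply, dotProduct, Pi.smul_apply,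
    smul_eq_mul, Finset.sum_mul, Finset.mul_sum]
  congr 1; funext k; ring

lemma aux_vecMulVec_mul {n : ℕ} (a b c d : Fin n → ℝ) :
    Matrix.vecMulVec a b * Matrix.vecMulVec c d = (b ⬝ᵥ c) • Matrix.vecMulVec a d := by
  ext i j
  simp only [Matrix.mul_apply, Matrix.vecMulVec_apply, Matrix.smul_apply,
    smul_eq_mul, Finset.sum_mul, Finset.mul_sum, dotProduct]
  congr 1; funext k; ring

/-- for unit `x`, `p` with `xᵀp = 0`, `α ∈ ℝ`, and the skew-symmetric matrix
`W = a bᵀ − b aᵀ` with `a = x`, `b = −α p` (i.e. `W = −α x pᵀ + α p xᵀ`), the matrix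
`I + W` is invertible and the Cayley-transform update satisfies
`(I + W)⁻¹ (I − W) x = [(1 − α²‖p‖²) x − 2α p] / (1 + α²‖p‖²)`. -/
theorem cayley_transform_update
    {n : ℕ} (x p : EuclideanSpace ℝ (Fin n)) (hx : ‖x‖ = 1)
    (hxp : (inner ℝ x p : ℝ) = 0) (α : ℝ)
    (W : Matrix (Fin n) (Fin n) ℝ)
    (hW : W = -α • Matrix.vecMulVec x p + α • Matrix.vecMulVec p x) :
    IsUnit (1 + W) ∧
    Matrix.mulVec ((1 + W)⁻¹ * (1 - W)) x
      = fun i => ((1 - α ^ 2 * ‖p‖ ^ 2) * x i - 2 * α * p i) / (1 + α ^ 2 * ‖p‖ ^ 2) := by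
  set c : ℝ := α ^ 2 * ‖p‖ ^ 2 with hc
  have hcpos : (0:ℝ) < 1 + c := by positivity
  have hcne : (1 + c : ℝ) ≠ 0 := ne_of_gt hcpos
  -- dot product facts
  have hxpd : (x : Fin n → ℝ) ⬝ᵥ (p : Fin n → ℝ) = 0 := by
    rw [← hxp]
    simp [dotProduct, PiLp.inner_apply, RCLike.inner_apply, mul_comm]
  have hpxd : (p : Fin n → ℝ) ⬝ᵥ (x : Fin n → ℝ) = 0 := by
    rw [dotProduct_comm]; exact hxpd
  have hxxd : (x : Fin n → ℝ) ⬝ᵥ (x : Fin n → ℝ) = 1 := by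
    have := real_inner_self_eq_norm_sq x
    rw [hx] at this
    simp only [PiLp.inner_apply, RCLike.inner_apply, conj_trivial] at this
    simpa [dotProduct] using this
  have hppd : (p : Fin n → ℝ) ⬝ᵥ (p : Fin n → ℝ) = ‖p‖ ^ 2 := by
    have := real_inner_self_eq_norm_sq p
    simp only [PiLp.inner_apply, RCLike.inner_apply, conj_trivial] at this
    simpa [dotProduct] using this
  -- powers of W
  have hW2 : W * W = (-(α^2)) • Matrix.vecMulVec (p : Fin n → ℝ) p
      + (-c) • Matrix.vecMulVec (x : Fin n → ℝ) x := by
    rw [hW]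
    simp only [add_mul, mul_add, Matrix.smul_mul, Matrix.mul_smul, aux_vecMulVec_mul,
      hxpd, hpxd, hxxd, hppd, zero_smul, smul_zero, one_smul, hc]
    module
  have hW3 : W * (W * W) = (-c) • W := by
    rw [hW2, hW]
    simp only [add_mul, mul_add, Matrix.smul_mul, Matrix.mul_smul, aux_vecMulVec_mul,
      hxpd, hpxd, hxxd, hppd, zero_smul, smul_zero, one_smul, smul_smul, smul_add, hc]
    module
  set M : Matrix (Fin n) (Fin n) ℝ := (1 + c) • 1 - W + W * W with hM
  have key_right : (1 + W) * M = (1 + c) • 1 := by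
    rw [hM]
    simp only [mul_sub, mul_add, add_mul, one_mul, mul_one, Matrix.mul_smul]
    rw [hW3]
    module
  have key_left : M * (1 + W) = (1 + c) • 1 := by
    rw [hM]
    simp only [mul_sub, mul_add, add_mul, sub_mul, one_mul, mul_one, Matrix.smul_mul]
    rw [mul_assoc, hW3]
    module
  have hrinv : (1 + W) * ((1 + c)⁻¹ • M) = 1 := by
    rw [Matrix.mul_smul, key_right, smul_smul, inv_mul_cancel₀ hcne, one_smul]
  have hlinv : ((1 + c)⁻¹ • M) * (1 + W) = 1 := by
    rw [Matrix.smul_mul, key_left, smul_smul, inv_mul_cancel₀ hcne, one_smul]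
  have hunit : IsUnit (1 + W) := ⟨⟨1 + W, (1 + c)⁻¹ • M, hrinv, hlinv⟩, rfl⟩
  have hinv : (1 + W)⁻¹ = (1 + c)⁻¹ • M := Matrix.inv_eq_right_inv hrinv
  refine ⟨hunit, ?_⟩
  -- vector computations
  have hWx : W *ᵥ (x : Fin n → ℝ) = α • (p : Fin n → ℝ) := by
    rw [hW]
    simp only [Matrix.add_mulVec, Matrix.smul_mulVec, aux_vecMulVec_mulVec,
      hpxd, hxxd, zero_smul, smul_zero, one_smul, smul_smul]
    module
  have hWp : W *ᵥ (p : Fin n → ℝ) = (-(α * ‖p‖ ^ 2)) • (x : Fin n → ℝ) := by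
    rw [hW]
    simp only [Matrix.add_mulVec, Matrix.smul_mulVec, aux_vecMulVec_mulVec,
      hxpd, hppd, zero_smul, smul_zero, smul_smul]
    module
  set v : Fin n → ℝ := fun i => x i - α * p i with hv
  have hdxv : (x : Fin n → ℝ) ⬝ᵥ v = 1 := by
    have h1' := hxxd; have h2' := hxpd
    simp only [dotProduct] at h1' h2' ⊢
    rw [hv]
    calc ∑ i, x i * (x i - α * p i) = ∑ i, (x i * x i - α * (x i * p i)) :=
          Finset.sum_congr rfl fun i _ => by ring
      _ = (∑ i, x i * x i) - α * ∑ i, x i * p i := by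
          rw [Finset.sum_sub_distrib, Finset.mul_sum]
      _ = 1 := by rw [h1', h2']; ring
  have hdpv : (p : Fin n → ℝ) ⬝ᵥ v = -(α * ‖p‖ ^ 2) := by
    have h1' := hppd; have h2' := hpxd
    simp only [dotProduct] at h1' h2' ⊢
    rw [hv]
    calc ∑ i, p i * (x i - α * p i) = ∑ i, (p i * x i - α * (p i * p i)) :=
          Finset.sum_congr rfl fun i _ => by ring
      _ = (∑ i, p i * x i) - α * ∑ i, p i * p i := by
          rw [Finset.sum_sub_distrib, Finset.mul_sum]
      _ = -(α * ‖p‖ ^ 2) := by rw [h1', h2']; ring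
  have h1 : (1 - W) *ᵥ (x : Fin n → ℝ) = v := by
    rw [Matrix.sub_mulVec, Matrix.one_mulVec, hWx, hv]
    funext i
    simp
  have hMv : M *ᵥ v
      = fun i => (1 + c) * v i - 2 * c * x i + (α * c - α) * p i := by
    rw [hM, hW2, hW]
    simp only [Matrix.sub_mulVec, Matrix.add_mulVec, Matrix.smul_mulVec,
      Matrix.one_mulVec, aux_vecMulVec_mulVec, hdxv, hdpv, smul_smul, one_smul]
    funext i
    simp only [Pi.add_apply, Pi.sub_apply, Pi.smul_apply, smul_eq_mul, hv]
    ring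
  have hfinal : ((1 + W)⁻¹ * (1 - W)) *ᵥ (x : Fin n → ℝ)
      = (1 + c)⁻¹ • fun i => (1 + c) * v i - 2 * c * x i + (α * c - α) * p i := by
    rw [← Matrix.mulVec_mulVec, h1, hinv, Matrix.smul_mulVec, hMv]
  rw [hfinal]
  funext i
  simp only [Pi.smul_apply, smul_eq_mul, hv, hc]
  field_simp
  ring
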